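/- arXiv:2605.16773 — 4 statements merged into one kernel-verified Lean document; each statement's English description precedes it below -/
import Mathlib

section
/- The generating function of the number of super partitions weighted by $q^{2|\Lambda|}$ equals $\prod_{k=1}^\infty \frac{1+q^{2k-1}}{1-q^{2k}}$; that is, the number of super partitions of total weight $m/2$ equals the coefficient of $q^m$ in $\prod_{k\ge 1}(1+q^{2k-1})/(1-q^{2k})$. -/
open PowerSeries

namespace SPaux

noncomputable section

variable {α : Type*}

open Finset

open scoped Classical

/-- A convenience constructor for the power series whose coefficients indicate a subset. -/
def indicatorSeries (α : Type*) [Semiring α] (s : Set ℕ) : PowerSeries α :=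
  PowerSeries.mk fun n => if n ∈ s then 1 else 0

theorem coeff_indicator (s : Set ℕ) [Semiring α] (n : ℕ) :
    coeff (R := α) n (indicatorSeries _ s) = if n ∈ s then 1 else 0 :=
  coeff_mk _ _

theorem constantCoeff_indicator (s : Set ℕ) [Semiring α] :
    constantCoeff (R := α) (indicatorSeries _ s) = if 0 ∈ s then 1 else 0 :=
  rfl

theorem two_series (i : ℕ) [Semiring α] :
    1 + (X : PowerSeries α) ^ i.succ = indicatorSeries α {0, i.succ} := by
  ext n
  simp only [coeff_indicator, coeff_one, coeff_X_pow, Set.mem_insert_iff, Set.mem_singleton_iff,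
    map_add]
  cases' n with d
  · simp [(Nat.succ_ne_zero i).symm]
  · simp [Nat.succ_ne_zero d]

theorem num_series' [Field α] (i : ℕ) :
    (1 - (X : PowerSeries α) ^ (i + 1))⁻¹ = indicatorSeries α {k | i + 1 ∣ k} := by
  rw [PowerSeries.inv_eq_iff_mul_eq_one]
  · ext n
    cases n with
    | zero => simp [mul_sub, zero_pow, constantCoeff_indicator]
    | succ n =>
      simp only [coeff_one, if_false, mul_sub, mul_one, coeff_indicator,
        LinearMap.map_sub, reduceCtorEq]
      simp_rw [coeff_mul, coeff_X_pow, coeff_indicator, @boole_mul _ _ _ _]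
      erw [@sum_ite _ _ _ _ _ (fun _ => Classical.propDecidable _), sum_ite]
      simp_rw [@filter_filter _ _ _ _ _, sum_const_zero, add_zero, sum_const, nsmul_eq_mul, mul_one,
        sub_eq_iff_eq_add, zero_add]
      symm
      split_ifs with h
      · suffices #{a ∈ antidiagonal (n + 1) | i + 1 ∣ a.fst ∧ a.snd = i + 1} = 1 by
          simp only [Set.mem_setOf_eq]; convert congr_arg ((↑) : ℕ → α) this; norm_cast
        rw [card_eq_one]
        cases' h with p hp
        refine ⟨((i + 1) * (p - 1), i + 1), ?_⟩
        ext ⟨a₁, a₂⟩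
        simp only [mem_filter, Prod.mk_inj, Finset.HasAntidiagonal.mem_antidiagonal, mem_singleton]
        constructor
        · rintro ⟨a_left, ⟨a, rfl⟩, rfl⟩
          refine ⟨?_, rfl⟩
          rw [Nat.mul_sub_left_distrib, ← hp, ← a_left, mul_one, Nat.add_sub_cancel]
        · rintro ⟨rfl, rfl⟩
          match p with
          | 0 => rw [mul_zero] at hp; cases hp
          | p + 1 => rw [hp]; simp [mul_add]
      · suffices #{a ∈ antidiagonal (n + 1) | i + 1 ∣ a.fst ∧ a.snd = i + 1} = 0 by
          simp only [Set.mem_setOf_eq]; convert congr_arg ((↑) : ℕ → α) this; norm_cast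
        rw [card_eq_zero]
        apply eq_empty_of_forall_notMem
        simp only [Prod.forall, mem_filter, not_and, Finset.HasAntidiagonal.mem_antidiagonal]
        rintro _ h₁ h₂ ⟨a, rfl⟩ rfl
        apply h
        simp [← h₂]
  · simp [zero_pow]

-- The main workhorse (copied from Archive/Wiedijk100Theorems/Partition.lean).
theorem partialGF_prop (α : Type*) [CommSemiring α] (n : ℕ) (s : Finset ℕ) (hs : ∀ i ∈ s, 0 < i)
    (c : ℕ → Set ℕ) (hc : ∀ i, i ∉ s → 0 ∈ c i) :
    #{p : n.Partition | (∀ j, p.parts.count j ∈ c j) ∧ ∀ j ∈ p.parts, j ∈ s} =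
      coeff (R := α) n (∏ i ∈ s, indicatorSeries α ((· * i) '' c i)) := by
  simp_rw [coeff_prod, coeff_indicator, prod_boole, sum_boole]
  apply congr_arg
  simp only [mem_univ, forall_true_left, not_and, not_forall, exists_prop,
    Set.mem_image, not_exists]
  set φ : (a : Nat.Partition n) →
    a ∈ filter (fun p ↦ (∀ (j : ℕ), Multiset.count j p.parts ∈ c j) ∧ ∀ j ∈ p.parts, j ∈ s) univ →
    ℕ →₀ ℕ := fun p _ => {
      toFun := fun i => Multiset.count i p.parts • i
      support := Finset.filter (fun i => i ≠ 0) p.parts.toFinset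
      mem_support_toFun := fun a => by
        simp only [smul_eq_mul, ne_eq, mul_eq_zero, Multiset.count_eq_zero]
        rw [not_or, not_not]
        simp only [Multiset.mem_toFinset, not_not, mem_filter] }
  refine Finset.card_bij φ ?_ ?_ ?_
  · intro a ha
    simp only [φ, not_forall, not_exists, not_and, exists_prop, mem_filter]
    rw [mem_finsuppAntidiag]
    dsimp only [ne_eq, smul_eq_mul, id_eq, eq_mpr_eq_cast, le_eq_subset, Finsupp.coe_mk]
    simp only [mem_univ, forall_true_left, not_and, not_forall, exists_prop,
      mem_filter, true_and] at ha
    refine ⟨⟨?_, fun i ↦ ?_⟩, fun i _ ↦ ⟨a.parts.count i, ha.1 i, rfl⟩⟩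
    · conv_rhs => simp [← a.parts_sum]
      rw [sum_multiset_count_of_subset _ s]
      · simp only [smul_eq_mul]
      · intro i
        simp only [Multiset.mem_toFinset, not_not, mem_filter]
        apply ha.2
    · simp only [ne_eq, Multiset.mem_toFinset, not_not, mem_filter, and_imp]
      exact fun hi _ ↦ ha.2 i hi
  · intro p₁ hp₁ p₂ hp₂ h
    apply Nat.Partition.ext
    simp only [true_and, mem_univ, mem_filter] at hp₁ hp₂
    ext i
    simp only [φ, ne_eq, Multiset.mem_toFinset, not_not, smul_eq_mul, Finsupp.mk.injEq] at h
    by_cases hi : i = 0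
    · rw [hi]
      rw [Multiset.count_eq_zero_of_notMem]
      · rw [Multiset.count_eq_zero_of_notMem]
        intro a; exact Nat.lt_irrefl 0 (hs 0 (hp₂.2 0 a))
      intro a; exact Nat.lt_irrefl 0 (hs 0 (hp₁.2 0 a))
    · rw [← mul_left_inj' hi]
      rw [funext_iff] at h
      exact h.2 i
  · simp only [φ, mem_filter, mem_finsuppAntidiag, mem_univ, exists_prop, true_and, and_assoc]
    rintro f ⟨hf, hf₃, hf₄⟩
    have hf' : f ∈ finsuppAntidiag s n := mem_finsuppAntidiag.mpr ⟨hf, hf₃⟩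
    simp only [mem_finsuppAntidiag] at hf'
    refine ⟨⟨∑ i ∈ s, Multiset.replicate (f i / i) i, ?_, ?_⟩, ?_, ?_, ?_⟩
    · intro i hi
      simp only [exists_prop, Multiset.mem_sum, mem_map, Function.Embedding.coeFn_mk] at hi
      rcases hi with ⟨t, ht, z⟩
      apply hs
      rwa [Multiset.eq_of_mem_replicate z]
    · simp_rw [Multiset.sum_sum, Multiset.sum_replicate, Nat.nsmul_eq_mul]
      rw [← hf'.1]
      refine sum_congr rfl fun i hi => Nat.div_mul_cancel ?_
      rcases hf₄ i hi with ⟨w, _, hw₂⟩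
      rw [← hw₂]
      exact dvd_mul_left _ _
    · intro i
      simp_rw [Multiset.count_sum', Multiset.count_replicate, sum_ite_eq']
      split_ifs with h
      · rcases hf₄ i h with ⟨w, hw₁, hw₂⟩
        rwa [← hw₂, Nat.mul_div_cancel _ (hs i h)]
      · exact hc _ h
    · intro i hi
      rw [Multiset.mem_sum] at hi
      rcases hi with ⟨j, hj₁, hj₂⟩
      rwa [Multiset.eq_of_mem_replicate hj₂]
    · ext i
      simp_rw [Multiset.count_sum', Multiset.count_replicate, sum_ite_eq']
      simp only [ne_eq, Multiset.mem_toFinset, not_not, smul_eq_mul, ite_mul,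
        zero_mul, Finsupp.coe_mk]
      split_ifs with h
      · apply Nat.div_mul_cancel
        rcases hf₄ i h with ⟨w, _, hw₂⟩
        apply Dvd.intro_left _ hw₂
      · apply symm
        rw [← Finsupp.notMem_support_iff]
        exact notMem_mono hf'.2 h

/-- The count-constraint family: odd parts appear at most once, even parts freely. -/
def c : ℕ → Set ℕ := fun i => if Odd i then ({0, 1} : Set ℕ) else Set.univ

theorem ind_one_add (i : ℕ) (hi : 0 < i) [Semiring α] :
    1 + (X : PowerSeries α) ^ i = indicatorSeries α {0, i} := by
  obtain ⟨j, rfl⟩ := Nat.exists_eq_succ_of_ne_zero hi.ne'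
  exact two_series j

theorem ind_geom [Field α] (i : ℕ) (hi : 0 < i) :
    (1 - (X : PowerSeries α) ^ i)⁻¹ = indicatorSeries α {k | i ∣ k} := by
  obtain ⟨j, rfl⟩ := Nat.exists_eq_succ_of_ne_zero hi.ne'
  exact num_series' j

theorem prod_Icc_two {M : Type*} [CommMonoid M] (m : ℕ) (f : ℕ → M) :
    ∏ i ∈ Icc 1 (2 * m), f i = ∏ k ∈ Icc 1 m, (f (2 * k - 1) * f (2 * k)) := by
  induction m with
  | zero => simp
  | succ m ih =>
    have h1 : 2 * (m + 1) = (2 * m + 1) + 1 := by ring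
    rw [h1, Finset.prod_Icc_succ_top (by omega), Finset.prod_Icc_succ_top (by omega),
      Finset.prod_Icc_succ_top (by omega) (f := fun k => f (2 * k - 1) * f (2 * k)), ih]
    have h2 : 2 * (m + 1) - 1 = 2 * m + 1 := by omega
    rw [h2, mul_assoc]
    congr 2

theorem prod_eq (m : ℕ) :
    (∏ k ∈ Finset.Icc 1 m,
        ((1 + (X : PowerSeries ℚ) ^ (2 * k - 1)) * (1 - (X : PowerSeries ℚ) ^ (2 * k))⁻¹)) =
      ∏ i ∈ Finset.Icc 1 (2 * m), indicatorSeries ℚ ((· * i) '' c i) := by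
  rw [prod_Icc_two]
  refine Finset.prod_congr rfl fun k hk => ?_
  rw [Finset.mem_Icc] at hk
  have hk1 : 1 ≤ k := hk.1
  have hodd : Odd (2 * k - 1) := ⟨k - 1, by omega⟩
  have heven : ¬ Odd (2 * k) := by simp [Nat.odd_iff, Nat.mul_mod_right]
  congr 1
  · rw [ind_one_add _ (by omega)]
    congr 1
    rw [c, if_pos hodd]
    rw [Set.image_pair]
    simp
  · rw [ind_geom _ (by omega), c, if_neg heven, Set.image_univ]
    have hset : (Set.range fun x => x * (2 * k)) = {n | 2 * k ∣ n} := by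
      ext x
      simp only [Set.mem_range, Set.mem_setOf_eq]
      constructor
      · rintro ⟨t, rfl⟩
        exact dvd_mul_left _ _
      · rintro ⟨t, rfl⟩
        exact ⟨t, mul_comm _ _⟩
    rw [hset]

/-- The equivalence between super-partition data and ordinary partitions of `m`
whose odd parts are distinct (with all parts in `Icc 1 (2*m)`). -/
def spEquiv (m : ℕ) :
    {p : Finset ℕ × Multiset ℕ //
        (∀ x ∈ p.2, 0 < x) ∧ (∑ a ∈ p.1, (2 * a + 1)) + 2 * p.2.sum = m} ≃
      {p : m.Partition //
        (∀ j, p.parts.count j ∈ c j) ∧ ∀ j ∈ p.parts, j ∈ Finset.Icc 1 (2 * m)} where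
  toFun := fun ⟨⟨A, S⟩, hpos, hsum⟩ => by
    refine ⟨⟨A.val.map (fun a => 2 * a + 1) + S.map (fun s => 2 * s), ?_, ?_⟩, ?_, ?_⟩
    · intro j hj
      rw [Multiset.mem_add] at hj
      rcases hj with hj | hj <;> rw [Multiset.mem_map] at hj <;> obtain ⟨x, hx, rfl⟩ := hj
      · omega
      · have := hpos x hx; omega
    · rw [Multiset.sum_add, ← hsum, Finset.sum_eq_multiset_sum]
      congr 1
      rw [show (fun s => 2 * s) = (fun s => 2 * id s) from rfl, Multiset.sum_map_mul_left]
      simp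
    · intro j
      simp only [c]
      split_ifs with hj
      · have h1 : Multiset.count j (S.map (fun s => 2 * s)) = 0 := by
          rw [Multiset.count_eq_zero]
          intro hmem
          rw [Multiset.mem_map] at hmem
          obtain ⟨x, _, rfl⟩ := hmem
          exact (by simpa [Nat.odd_iff, Nat.mul_mod_right] using hj)
        have h2 : (A.val.map (fun a => 2 * a + 1)).Nodup :=
          A.nodup.map (fun x y h => by omega)
        have h3 := Multiset.nodup_iff_count_le_one.mp h2 j
        rw [Multiset.count_add, h1, add_zero]
        interval_cases h : Multiset.count j (A.val.map fun a => 2 * a + 1) <;> simp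
      · exact Set.mem_univ _
    · intro j hj
      have hpos' : 0 < j := by
        rw [Multiset.mem_add] at hj
        rcases hj with hj | hj <;> rw [Multiset.mem_map] at hj <;> obtain ⟨x, hx, rfl⟩ := hj
        · omega
        · have := hpos x hx; omega
      have hle : j ≤ (A.val.map (fun a => 2 * a + 1) + S.map (fun s => 2 * s)).sum :=
        Multiset.single_le_sum (fun x _ => Nat.zero_le x) j hj
      have hsum' : (A.val.map (fun a => 2 * a + 1) + S.map (fun s => 2 * s)).sum = m := by
        rw [Multiset.sum_add, ← hsum, Finset.sum_eq_multiset_sum]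
        congr 1
        rw [show (fun s => 2 * s) = (fun s => 2 * id s) from rfl, Multiset.sum_map_mul_left]
        simp
      rw [Finset.mem_Icc]
      omega
  invFun := fun ⟨p, hp⟩ => by
    refine ⟨⟨((p.parts.filter (fun j => Odd j)).map (fun j => j / 2)).toFinset,
      (p.parts.filter (fun j => ¬ Odd j)).map (fun j => j / 2)⟩, ?_, ?_⟩
    · intro x hx
      rw [Multiset.mem_map] at hx
      obtain ⟨j, hj, rfl⟩ := hx
      rw [Multiset.mem_filter] at hj
      have h1 := p.parts_pos hj.1
      have h2 := hj.2
      rw [Nat.odd_iff] at h2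
      omega
    · -- sum property
      have hodds_nodup : (p.parts.filter (fun j => Odd j)).Nodup := by
        rw [Multiset.nodup_iff_count_le_one]
        intro j
        by_cases hj : Odd j
        · have := hp.1 j
          rw [c, if_pos hj] at this
          rw [Multiset.count_filter, if_pos hj]
          rcases this with h | h <;> simp_all
        · rw [Multiset.count_filter, if_neg hj]
          exact Nat.zero_le 1
      have hmap_nodup : ((p.parts.filter (fun j => Odd j)).map (fun j => j / 2)).Nodup := by
        refine Multiset.Nodup.map_on ?_ hodds_nodup
        intro x hx y hy hxy
        rw [Multiset.mem_filter] at hx hy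
        have h1 := hx.2; have h2 := hy.2
        rw [Nat.odd_iff] at h1 h2
        omega
      have hA : (((p.parts.filter (fun j => Odd j)).map (fun j => j / 2)).toFinset).val
          = (p.parts.filter (fun j => Odd j)).map (fun j => j / 2) := by
        simp only [Multiset.toFinset_val]
        exact Multiset.dedup_eq_self.mpr hmap_nodup
      rw [Finset.sum_eq_multiset_sum, hA, Multiset.map_map]
      have h1 : ((p.parts.filter (fun j => Odd j)).map ((fun a => 2 * a + 1) ∘ (fun j => j / 2))).sum
          = (p.parts.filter (fun j => Odd j)).sum := by
        congr 1
        refine Multiset.map_congr rfl ?_ |>.trans (Multiset.map_id _)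
        intro j hj
        rw [Multiset.mem_filter] at hj
        have := hj.2
        rw [Nat.odd_iff] at this
        simp only [Function.comp_apply, id_eq]
        omega
      have h2 : 2 * ((p.parts.filter (fun j => ¬ Odd j)).map (fun j => j / 2)).sum
          = (p.parts.filter (fun j => ¬ Odd j)).sum := by
        rw [show (2 : ℕ) * _ = ((p.parts.filter (fun j => ¬ Odd j)).map
            (fun j => 2 * (j / 2))).sum by
          rw [show (fun j : ℕ => 2 * (j / 2)) = (fun j => 2 * ((fun i : ℕ => i / 2) j)) from rfl,
            ← Multiset.sum_map_mul_left]]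
        congr 1
        refine Multiset.map_congr rfl ?_ |>.trans (Multiset.map_id _)
        intro j hj
        rw [Multiset.mem_filter] at hj
        have := hj.2
        rw [Nat.odd_iff] at this
        simp only [id_eq]
        omega
      rw [h1, h2, ← Multiset.sum_add, Multiset.filter_add_not, p.parts_sum]
  left_inv := by
    rintro ⟨⟨A, S⟩, hpos, hsum⟩
    apply Subtype.ext
    simp only
    have hf1 : Multiset.filter (fun j => Odd j) (A.val.map (fun a => 2 * a + 1)
        + S.map (fun s => 2 * s)) = A.val.map (fun a => 2 * a + 1) := by
      rw [Multiset.filter_add]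
      rw [Multiset.filter_eq_self.mpr, Multiset.filter_eq_nil.mpr, add_zero]
      · intro j hj
        rw [Multiset.mem_map] at hj
        obtain ⟨x, _, rfl⟩ := hj
        simp [Nat.odd_iff, Nat.mul_mod_right]
      · intro j hj
        rw [Multiset.mem_map] at hj
        obtain ⟨x, _, rfl⟩ := hj
        exact ⟨x, by omega⟩
    have hf2 : Multiset.filter (fun j => ¬ Odd j) (A.val.map (fun a => 2 * a + 1)
        + S.map (fun s => 2 * s)) = S.map (fun s => 2 * s) := by
      rw [Multiset.filter_add]
      rw [Multiset.filter_eq_nil.mpr, Multiset.filter_eq_self.mpr, zero_add]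
      · intro j hj
        rw [Multiset.mem_map] at hj
        obtain ⟨x, _, rfl⟩ := hj
        simp [Nat.odd_iff, Nat.mul_mod_right]
      · intro j hj
        rw [Multiset.mem_map] at hj
        obtain ⟨x, _, rfl⟩ := hj
        intro h
        exact (by simpa [Nat.odd_iff, Nat.mul_mod_right] using h)
    ext1
    · -- first component
      simp only [hf1, Multiset.map_map]
      have : (A.val.map ((fun j => j / 2) ∘ (fun a => 2 * a + 1))) = A.val := by
        refine Multiset.map_congr rfl ?_ |>.trans (Multiset.map_id _)
        intro a _
        simp only [Function.comp_apply, id_eq]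
        omega
      rw [this, Finset.val_toFinset]
    · -- second component
      simp only [hf2, Multiset.map_map]
      refine Multiset.map_congr rfl ?_ |>.trans (Multiset.map_id _)
      intro s _
      simp only [Function.comp_apply, id_eq]
      omega
  right_inv := by
    rintro ⟨p, hp⟩
    apply Subtype.ext
    apply Nat.Partition.ext
    simp only
    have hodds_nodup : (p.parts.filter (fun j => Odd j)).Nodup := by
      rw [Multiset.nodup_iff_count_le_one]
      intro j
      by_cases hj : Odd j
      · have := hp.1 j
        rw [c, if_pos hj] at this
        rw [Multiset.count_filter, if_pos hj]
        rcases this with h | h <;> simp_all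
      · rw [Multiset.count_filter, if_neg hj]
        exact Nat.zero_le 1
    have hmap_nodup : ((p.parts.filter (fun j => Odd j)).map (fun j => j / 2)).Nodup := by
      refine Multiset.Nodup.map_on ?_ hodds_nodup
      intro x hx y hy hxy
      rw [Multiset.mem_filter] at hx hy
      have h1 := hx.2; have h2 := hy.2
      rw [Nat.odd_iff] at h1 h2
      omega
    have hA : (((p.parts.filter (fun j => Odd j)).map (fun j => j / 2)).toFinset).val
        = (p.parts.filter (fun j => Odd j)).map (fun j => j / 2) := by
      simp only [Multiset.toFinset_val]
      exact Multiset.dedup_eq_self.mpr hmap_nodup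
    rw [hA, Multiset.map_map, Multiset.map_map]
    have h1 : ((p.parts.filter (fun j => Odd j)).map ((fun a => 2 * a + 1) ∘ (fun j => j / 2)))
        = p.parts.filter (fun j => Odd j) := by
      refine Multiset.map_congr rfl ?_ |>.trans (Multiset.map_id _)
      intro j hj
      rw [Multiset.mem_filter] at hj
      have := hj.2
      rw [Nat.odd_iff] at this
      simp only [Function.comp_apply, id_eq]
      omega
    have h2 : ((p.parts.filter (fun j => ¬ Odd j)).map ((fun s => 2 * s) ∘ (fun j => j / 2)))
        = p.parts.filter (fun j => ¬ Odd j) := by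
      refine Multiset.map_congr rfl ?_ |>.trans (Multiset.map_id _)
      intro j hj
      rw [Multiset.mem_filter] at hj
      have hpos := p.parts_pos hj.1
      have := hj.2
      rw [Nat.odd_iff] at this
      simp only [Function.comp_apply, id_eq]
      omega
    rw [h1, h2, Multiset.filter_add_not]

end

end SPaux

/-- The number of super partitions of total weight `m/2` equals the coefficient
of `q^m` in `∏_{k≥1} (1+q^{2k-1})/(1-q^{2k})`.  A super partition is encoded as a pair
consisting of a finite set `A ⊆ ℕ` (the odd parts are `a + 1/2` for `a ∈ A`, necessarily
distinct) and a multiset `S` of positive integers (the even parts), with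
`2|Λ| = ∑_{a∈A}(2a+1) + 2·(S.sum)`.  Since factors with index `k > m` do not contribute to
the coefficient of `q^m`, the infinite product is represented by its truncation at `k = m`. -/
theorem superPartition_genFunc (m : ℕ) :
    (Nat.card {p : Finset ℕ × Multiset ℕ //
        (∀ x ∈ p.2, 0 < x) ∧ (∑ a ∈ p.1, (2 * a + 1)) + 2 * p.2.sum = m} : ℚ) =
      PowerSeries.coeff (R := ℚ) m
        (∏ k ∈ Finset.Icc 1 m,
          ((1 + PowerSeries.X ^ (2 * k - 1)) * (1 - PowerSeries.X ^ (2 * k))⁻¹)) := by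
  classical
  have key := SPaux.partialGF_prop ℚ m (Finset.Icc 1 (2 * m))
    (fun i hi => (Finset.mem_Icc.mp hi).1) SPaux.c
    (fun i _ => by
      unfold SPaux.c
      split_ifs
      · exact Set.mem_insert 0 {1}
      · exact Set.mem_univ 0)
  rw [SPaux.prod_eq m, ← key]
  norm_cast
  rw [Nat.card_congr (SPaux.spEquiv m), Nat.card_eq_fintype_card]
  convert Fintype.card_subtype _ using 2
end

section
/- For $N$ variables and a parameter $t$, the identity $\sum_{i=1}^N \prod_{j\neq i} \frac{x_i - t x_j}{x_i - x_j} = \frac{1-t^N}{1-t}$ holds as an identity of rational functions. -/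
open Polynomial Finset

lemma interpolate_coeff_top' {K : Type} [Field K] (N : ℕ)
    (x : Fin N → K) (r : Fin N → K) :
    (Lagrange.interpolate Finset.univ x r).coeff (N - 1) =
      ∑ i : Fin N, r i * ∏ j ∈ Finset.univ.erase i, (x i - x j)⁻¹ := by
  rw [Lagrange.interpolate_apply, Polynomial.finset_sum_coeff]
  refine Finset.sum_congr rfl fun i _ => ?_
  rw [Polynomial.coeff_C_mul]
  congr 1
  have hcard : (Finset.univ.erase i).card = N - 1 := by
    rw [Finset.card_erase_of_mem (Finset.mem_univ i), Finset.card_univ, Fintype.card_fin]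
  unfold Lagrange.basis
  simp_rw [Lagrange.basisDivisor]
  rw [Finset.prod_mul_distrib, ← map_prod]
  set M : K[X] := ∏ j ∈ Finset.univ.erase i, (X - C (x j)) with hM
  have hMm : M.Monic := monic_prod_of_monic _ _ fun j _ => monic_X_sub_C _
  have hMd : M.natDegree = N - 1 := by
    rw [hM, natDegree_prod _ _ fun j _ => X_sub_C_ne_zero (x j)]
    simp [natDegree_X_sub_C, hcard]
  rw [coeff_C_mul, ← hMd, hMm.coeff_natDegree, mul_one]

/-- For pairwise distinct `x₁,…,x_N` in a field and `t ≠ 1`,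
`∑_{i=1}^N ∏_{j≠i} (x_i - t x_j)/(x_i - x_j) = (1-t^N)/(1-t)`. -/
theorem sum_prod_t_identity {K : Type} [Field K] (N : ℕ) (t : K) (ht : t ≠ 1)
    (x : Fin N → K) (hx : Function.Injective x) :
    ∑ i : Fin N, ∏ j ∈ Finset.univ.erase i, (x i - t * x j) / (x i - x j) =
      (1 - t ^ N) / (1 - t) := by
  classical
  rcases Nat.eq_zero_or_pos N with hN | hN
  · subst hN; simp
  have ht' : (1 : K) - t ≠ 0 := sub_ne_zero_of_ne (Ne.symm ht)
  set P : K[X] := ∏ j : Fin N, (X - C (x j)) with hP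
  set Q : K[X] := ∏ j : Fin N, (X - C (t * x j)) with hQ
  set D : K[X] := Q - C (t ^ N) * P with hD
  have hPm : P.Monic := monic_prod_of_monic _ _ fun j _ => monic_X_sub_C _
  have hQm : Q.Monic := monic_prod_of_monic _ _ fun j _ => monic_X_sub_C _
  have hPd : P.natDegree = N := by
    rw [hP, natDegree_prod _ _ fun j _ => X_sub_C_ne_zero _]
    simp only [natDegree_X_sub_C]
    simp
  have hQd : Q.natDegree = N := by
    rw [hQ, natDegree_prod _ _ fun j _ => X_sub_C_ne_zero _]
    simp only [natDegree_X_sub_C]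
    simp
  have hD0 : D.eval 0 = 0 := by
    have h1 : (∏ j : Fin N, (-(t * x j))) = t ^ N * ∏ j : Fin N, (-(x j)) := by
      rw [show (t:K)^N = ∏ _j : Fin N, t by simp, ← Finset.prod_mul_distrib]
      exact Finset.prod_congr rfl fun j _ => by ring
    simp [hD, hP, hQ, eval_prod, h1]
  -- D = X * g'
  set g' : K[X] := D /ₘ X with hg'
  have hDX : D = X * g' := by
    have := Polynomial.modByMonic_add_div D (X : K[X])
    rw [Polynomial.modByMonic_X, hD0, map_zero, zero_add] at this
    exact this.symm
  have hDdeg : D.natDegree ≤ N := by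
    refine le_trans (Polynomial.natDegree_sub_le _ _) ?_
    refine max_le (le_of_eq hQd) (le_trans (natDegree_C_mul_le _ _) (le_of_eq hPd))
  have hg'deg : g'.natDegree ≤ N - 1 := by
    rw [hg', natDegree_divByMonic _ (monic_X (R := K)), natDegree_X]
    omega
  set g : K[X] := C ((1 - t)⁻¹) * g' with hg
  have hgdeg : g.degree < (Finset.univ : Finset (Fin N)).card := by
    rw [Finset.card_univ, Fintype.card_fin]
    rcases eq_or_ne g 0 with h | h
    · rw [h, degree_zero]; exact bot_lt_iff_ne_bot.mpr (by simp)
    · rw [← natDegree_lt_iff_degree_lt h]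
      calc g.natDegree ≤ g'.natDegree := by
              rw [hg]; exact natDegree_C_mul_le _ _
        _ ≤ N - 1 := hg'deg
        _ < N := by omega
  -- evaluation of g at the nodes
  have heval : ∀ i : Fin N, g.eval (x i) = ∏ j ∈ Finset.univ.erase i, (x i - t * x j) := by
    intro i
    by_cases hxi : x i = 0
    · -- x i = 0 case: use coefficient 1 of D
      have hgeval : g'.eval (x i) = D.coeff 1 := by
        rw [hxi, ← Polynomial.coeff_zero_eq_eval_zero, hDX, Polynomial.coeff_X_mul]
      have hQ1 : Q.coeff 1 = ∏ j ∈ Finset.univ.erase i, ((0:K) - t * x j) := by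
        rw [hQ, ← Finset.mul_prod_erase _ _ (Finset.mem_univ i), hxi, mul_zero, map_zero,
          sub_zero, Polynomial.coeff_X_mul, Polynomial.coeff_zero_eq_eval_zero, eval_prod]
        exact Finset.prod_congr rfl fun j _ => by simp
      have hP1 : P.coeff 1 = ∏ j ∈ Finset.univ.erase i, ((0:K) - x j) := by
        rw [hP, ← Finset.mul_prod_erase _ _ (Finset.mem_univ i), hxi, map_zero,
          sub_zero, Polynomial.coeff_X_mul, Polynomial.coeff_zero_eq_eval_zero, eval_prod]
        exact Finset.prod_congr rfl fun j _ => by simp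
      have hcard : (Finset.univ.erase i).card = N - 1 := by
        rw [Finset.card_erase_of_mem (Finset.mem_univ i), Finset.card_univ, Fintype.card_fin]
      have hkey : t ^ N * ∏ j ∈ Finset.univ.erase i, ((0:K) - x j)
          = t * ∏ j ∈ Finset.univ.erase i, ((0:K) - t * x j) := by
        have : (∏ j ∈ Finset.univ.erase i, ((0:K) - t * x j))
            = t ^ (N - 1) * ∏ j ∈ Finset.univ.erase i, ((0:K) - x j) := by
          rw [show (t:K)^(N-1) = ∏ _j ∈ Finset.univ.erase i, t by
              rw [Finset.prod_const, hcard], ← Finset.prod_mul_distrib]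
          exact Finset.prod_congr rfl fun j _ => by ring
        rw [this, ← mul_assoc, ← pow_succ']
        congr 2
        omega
      have hDcoeff : D.coeff 1 = (1 - t) * ∏ j ∈ Finset.univ.erase i, ((0:K) - t * x j) := by
        rw [hD, Polynomial.coeff_sub, Polynomial.coeff_C_mul, hQ1, hP1, hkey]
        ring
      rw [hg, eval_mul, eval_C, hgeval, hDcoeff, hxi]
      rw [inv_mul_cancel_left₀ ht']
    · -- x i ≠ 0 case
      have hPe : P.eval (x i) = 0 := by
        rw [hP, eval_prod]
        exact Finset.prod_eq_zero (Finset.mem_univ i) (by simp)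
      have hQe : Q.eval (x i) = (1 - t) * x i * ∏ j ∈ Finset.univ.erase i, (x i - t * x j) := by
        rw [hQ, eval_prod]
        rw [← Finset.mul_prod_erase _ _ (Finset.mem_univ i)]
        have : eval (x i) (X - C (t * x i)) = (1 - t) * x i := by simp; ring
        rw [this]
        congr 1
        exact Finset.prod_congr rfl fun j _ => by simp
      have hDe : D.eval (x i) = (1 - t) * x i * ∏ j ∈ Finset.univ.erase i, (x i - t * x j) := by
        rw [hD, eval_sub, eval_mul, eval_C, hPe, hQe, mul_zero, sub_zero]
      have hDe' : D.eval (x i) = x i * g'.eval (x i) := by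
        rw [hDX]; simp
      have : g'.eval (x i) = (1 - t) * ∏ j ∈ Finset.univ.erase i, (x i - t * x j) := by
        refine mul_left_cancel₀ hxi ?_
        rw [← hDe', hDe]
        ring
      rw [hg, eval_mul, eval_C, this, inv_mul_cancel_left₀ ht']
  -- top coefficient of g
  have hcoeff : g.coeff (N - 1) = (1 - t)⁻¹ * (1 - t ^ N) := by
    have hDN : D.coeff N = 1 - t ^ N := by
      rw [hD, Polynomial.coeff_sub, Polynomial.coeff_C_mul, ← hQd, hQm.coeff_natDegree,
        hQd, ← hPd, hPm.coeff_natDegree, mul_one]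
    have : g'.coeff (N - 1) = D.coeff N := by
      rw [hDX, show N = (N-1) + 1 by omega, Polynomial.coeff_X_mul]
      norm_num
    rw [hg, Polynomial.coeff_C_mul, this, hDN]
  -- interpolation
  have hinj : Set.InjOn x (Finset.univ : Finset (Fin N)) := fun a _ b _ h => hx h
  have hint : g = Lagrange.interpolate Finset.univ x
      (fun i => ∏ j ∈ Finset.univ.erase i, (x i - t * x j)) :=
    Lagrange.eq_interpolate_of_eval_eq _ hinj hgdeg (fun i _ => heval i)
  have hfin := congrArg (fun p : K[X] => p.coeff (N - 1)) hint
  simp only [hcoeff, interpolate_coeff_top'] at hfin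
  calc ∑ i : Fin N, ∏ j ∈ Finset.univ.erase i, (x i - t * x j) / (x i - x j)
      = ∑ i : Fin N, (∏ j ∈ Finset.univ.erase i, (x i - t * x j)) *
          ∏ j ∈ Finset.univ.erase i, (x i - x j)⁻¹ := by
        refine Finset.sum_congr rfl fun i _ => ?_
        rw [← Finset.prod_mul_distrib]
        exact Finset.prod_congr rfl fun j _ => div_eq_mul_inv _ _
    _ = (1 - t)⁻¹ * (1 - t ^ N) := hfin.symm
    _ = (1 - t ^ N) / (1 - t) := by rw [div_eq_mul_inv, mul_comm]
end

section
/- Define $c_k$ and $\widetilde{c}_k$ by the generating functions $\sum_{k\ge 0} c_k z^k = \exp(\sum_{r\ge1} \frac{1-t^r}{r} p_r z^r)$ and $\sum_{k\ge 0} \widetilde{c}_k z^{-k} = \exp(\sum_{n\ge1} (q^{-n}-1) \partial_{p_n} z^{-n})$, acting on the polynomial ring $\mathbb{Q}(q,t)[p_1, p_2, \ldots]$. Then the commutator satisfies $[\widetilde{c}_k, c_\ell] = (1-t)(q^{-1}-1) \sum_{m=0}^{k-1} [[k-m]]_{(t, q^{-1})} \, c_{m+\ell-k} \, \widetilde{c}_m$,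 where $c_n = 0$ for $n < 0$ and $[[n]]_{(t_1,t_2)} = \sum_{j=0}^{n-1} t_1^j t_2^{n-1-j}$. -/
noncomputable section

variable {K : Type} [Field K] [CharZero K]

/-- Coefficient of `z^n` in `exp f` for a power series `f` (over the bosonic polynomial ring
`K[p₁,p₂,…]`, modelled as `MvPolynomial ℕ K` with `X r ↔ p_r`) with zero constant term. -/
def expCoeffP (f : PowerSeries (MvPolynomial ℕ K)) (n : ℕ) : MvPolynomial ℕ K :=
  PowerSeries.coeff n (∑ k ∈ Finset.range (n + 1), ((k.factorial : K)⁻¹) • f ^ k)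

/-- `c_k[p]`, defined by the generating function
`∑_{k≥0} c_k z^k = exp(∑_{r≥1} (1-t^r)/r · p_r z^r)`.
(The dual coefficients `c_k^∨` are `cPoly t⁻¹ k`.) -/
def cPoly (t : K) (k : ℕ) : MvPolynomial ℕ K :=
  expCoeffP (PowerSeries.mk fun r =>
    if r = 0 then 0 else ((1 - t ^ r) / (r : K)) • MvPolynomial.X r) k

/-- `c_z` for `z ∈ ℤ`, with `c_z = 0` for `z < 0`. -/
def cPolyZ (t : K) (z : ℤ) : MvPolynomial ℕ K :=
  if 0 ≤ z then cPoly t z.toNat else 0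

/-- The substitution `p_n ↦ p_n + b_n w^n`, which is how the normally ordered exponential
`exp(∑_{n≥1} b_n ∂_{p_n} z^{-n})` acts on polynomials in the `p`'s (with `w = z⁻¹`). -/
def subShift (b : ℕ → K) (g : MvPolynomial ℕ K) : Polynomial (MvPolynomial ℕ K) :=
  MvPolynomial.aeval
    (fun n => Polynomial.C (MvPolynomial.X n) +
      Polynomial.C (MvPolynomial.C (b n)) * Polynomial.X ^ n) g

/-- The operator coefficient of `z^{-k}` in `exp(∑_{n≥1} b_n ∂_{p_n} z^{-n})`:
`ctOp b k g` is the coefficient of `w^k` in `g(p_n + b_n w^n)`. -/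
def ctOp (b : ℕ → K) (k : ℕ) (g : MvPolynomial ℕ K) : MvPolynomial ℕ K :=
  (subShift b g).coeff k

/-- Parameters `b_n = q^{-n} - 1` giving `\widetilde{c}_k = ctOp (bq q) k`. -/
def bq (q : K) : ℕ → K := fun n => q⁻¹ ^ n - 1

/-- Parameters `b_n = q^n - 1` giving `\widetilde{c}_k^∨ = ctOp (bqVee q) k`. -/
def bqVee (q : K) : ℕ → K := fun n => q ^ n - 1

/-- `[[n]]_{(t₁,t₂)} = ∑_{j=0}^{n-1} t₁^j t₂^{n-1-j}`. -/
def qtInt (t₁ t₂ : K) (n : ℕ) : K := ∑ j ∈ Finset.range n, t₁ ^ j * t₂ ^ (n - 1 - j)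

end


open PowerSeries Finset
set_option linter.unusedSectionVars false
set_option linter.unusedVariables false
set_option maxHeartbeats 1000000
noncomputable section
namespace CtC
variable {K : Type} [Field K] [CharZero K]
variable {S : Type} [CommRing S] [Algebra K S]

def EcX (f : PowerSeries S) (n : ℕ) : S :=
  PowerSeries.coeff n (∑ k ∈ Finset.range (n + 1), ((k.factorial : K)⁻¹) • f ^ k)

theorem coeff_pow_eq_zero {f : PowerSeries S} (hf : constantCoeff f = 0) {n k : ℕ}
    (h : n < k) : coeff n (f ^ k) = 0 :=
  X_pow_dvd_iff.mp (pow_dvd_pow_of_dvd (X_dvd_iff.mpr hf) k) n h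

theorem coeff_pow_mul_pow_eq_zero {f g : PowerSeries S} (hf : constantCoeff f = 0)
    (hg : constantCoeff g = 0) {n a b : ℕ} (h : n < a + b) :
    coeff n (f ^ a * g ^ b) = 0 := by
  have hd : (X : PowerSeries S) ^ (a + b) ∣ f ^ a * g ^ b := by
    rw [pow_add]
    exact mul_dvd_mul (pow_dvd_pow_of_dvd (X_dvd_iff.mpr hf) a)
      (pow_dvd_pow_of_dvd (X_dvd_iff.mpr hg) b)
  exact X_pow_dvd_iff.mp hd n h

theorem Ec_eq {f : PowerSeries S} (hf : constantCoeff f = 0) {n N : ℕ} (h : n ≤ N) :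
    EcX (K := K) f n
      = coeff n (∑ k ∈ Finset.range (N + 1), ((k.factorial : K)⁻¹) • f ^ k) := by
  unfold EcX
  rw [map_sum, map_sum]
  refine Finset.sum_subset (Finset.range_subset_range.mpr (by omega)) ?_
  intro k _ hk
  rw [Finset.mem_range, not_lt] at hk
  rw [PowerSeries.coeff_smul, coeff_pow_eq_zero hf (by omega), smul_zero]

theorem Ec_zero (f : PowerSeries S) : EcX (K := K) f 0 = 1 := by
  simp [EcX]

theorem fact_inv_choose {m k : ℕ} (h : m ≤ k) :
    ((k.factorial : K)⁻¹ * (k.choose m : K)) =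
      (m.factorial : K)⁻¹ * ((k - m).factorial : K)⁻¹ := by
  have h1 : (k.choose m) * m.factorial * (k - m).factorial = k.factorial :=
    Nat.choose_mul_factorial_mul_factorial h
  have h2 : ((k.choose m : K)) * (m.factorial : K) * ((k - m).factorial : K)
      = (k.factorial : K) := by exact_mod_cast congrArg (Nat.cast (R := K)) h1
  have hm : (m.factorial : K) ≠ 0 := Nat.cast_ne_zero.mpr m.factorial_ne_zero
  have hkm : ((k - m).factorial : K) ≠ 0 := Nat.cast_ne_zero.mpr (k - m).factorial_ne_zero
  have hk : (k.factorial : K) ≠ 0 := Nat.cast_ne_zero.mpr k.factorial_ne_zero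
  field_simp
  linear_combination h2

theorem Ec_mul {f g : PowerSeries S} (hf : constantCoeff f = 0)
    (hg : constantCoeff g = 0) (n : ℕ) :
    EcX (K := K) (f + g) n
      = ∑ p ∈ antidiagonal n, EcX (K := K) f p.1 * EcX (K := K) g p.2 := by
  set T : ℕ × ℕ → S := fun p =>
    ((p.1.factorial : K)⁻¹ * (p.2.factorial : K)⁻¹) • coeff n (f ^ p.1 * g ^ p.2) with hT
  have hsq : ∀ p : ℕ × ℕ, p ∈ Finset.range (n+1) ×ˢ Finset.range (n+1) →
      p ∉ (Finset.range (n+1)).biUnion antidiagonal → T p = 0 := by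
    intro p _ hp
    have : n < p.1 + p.2 := by
      by_contra hle
      exact hp (Finset.mem_biUnion.mpr ⟨p.1 + p.2, Finset.mem_range.mpr (by omega),
        Finset.HasAntidiagonal.mem_antidiagonal.mpr rfl⟩)
    rw [hT]
    simp only
    rw [coeff_pow_mul_pow_eq_zero hf hg this, smul_zero]
  have hsub : (Finset.range (n+1)).biUnion antidiagonal
      ⊆ Finset.range (n+1) ×ˢ Finset.range (n+1) := by
    intro p hp
    rcases Finset.mem_biUnion.mp hp with ⟨k, hk, hpk⟩
    rw [Finset.HasAntidiagonal.mem_antidiagonal] at hpk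
    rw [Finset.mem_range] at hk
    exact Finset.mem_product.mpr ⟨Finset.mem_range.mpr (by omega),
      Finset.mem_range.mpr (by omega)⟩
  have hdisj : (↑(Finset.range (n+1)) : Set ℕ).PairwiseDisjoint antidiagonal := by
    intro a _ b _ hab
    apply Finset.disjoint_left.mpr
    intro p hpa hpb
    rw [Finset.HasAntidiagonal.mem_antidiagonal] at hpa hpb
    exact hab (hpa ▸ hpb)
  -- LHS
  have hL : EcX (K := K) (f + g) n = ∑ p ∈ (Finset.range (n+1)).biUnion antidiagonal, T p := by
    rw [Finset.sum_biUnion hdisj]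
    unfold EcX
    rw [map_sum]
    refine Finset.sum_congr rfl ?_
    intro k hk
    rw [Finset.Nat.sum_antidiagonal_eq_sum_range_succ (fun a b => T (a, b))]
    rw [add_pow, Finset.smul_sum, map_sum]
    refine Finset.sum_congr rfl ?_
    intro m hm
    rw [Finset.mem_range] at hm
    have : (f ^ m * g ^ (k - m) * (k.choose m : PowerSeries S))
        = ((k.choose m : K)) • (f ^ m * g ^ (k - m)) := by
      rw [mul_comm, ← nsmul_eq_mul, ← Nat.cast_smul_eq_nsmul K]
    rw [this, smul_smul, PowerSeries.coeff_smul, hT]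
    simp only
    rw [fact_inv_choose (by omega)]
  rw [hL, Finset.sum_subset hsub hsq]
  -- RHS
  have hR : ∀ p ∈ antidiagonal n, EcX (K := K) f p.1 * EcX (K := K) g p.2
      = coeff p.1 (∑ a ∈ Finset.range (n+1), ((a.factorial : K)⁻¹) • f ^ a)
        * coeff p.2 (∑ b ∈ Finset.range (n+1), ((b.factorial : K)⁻¹) • g ^ b) := by
    intro p hp
    rw [Finset.HasAntidiagonal.mem_antidiagonal] at hp
    rw [Ec_eq hf (by omega : p.1 ≤ n), Ec_eq hg (by omega : p.2 ≤ n)]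
  rw [Finset.sum_product]
  rw [Finset.sum_congr rfl hR, ← PowerSeries.coeff_mul, Finset.sum_mul_sum, map_sum]
  refine Finset.sum_congr rfl (fun a _ => ?_)
  rw [map_sum]
  refine Finset.sum_congr rfl (fun b _ => ?_)
  rw [hT]
  simp only
  rw [smul_mul_assoc, mul_smul_comm, smul_smul, PowerSeries.coeff_smul]

theorem Ec_map {S' : Type} [CommRing S'] [Algebra K S'] (φ : S →ₐ[K] S')
    (f : PowerSeries S) (n : ℕ) :
    EcX (K := K) (PowerSeries.map (φ : S →+* S') f) n = φ (EcX (K := K) f n) := by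
  unfold EcX
  have h : (∑ k ∈ Finset.range (n + 1),
        ((k.factorial : K)⁻¹) • (PowerSeries.map (φ : S →+* S') f) ^ k)
      = PowerSeries.map (φ : S →+* S')
        (∑ k ∈ Finset.range (n + 1), ((k.factorial : K)⁻¹) • f ^ k) := by
    rw [map_sum]
    refine Finset.sum_congr rfl (fun k _ => ?_)
    ext m
    simp only [PowerSeries.coeff_map, PowerSeries.coeff_smul, ← map_pow]
    exact (map_smul φ ((k.factorial : K)⁻¹) ((PowerSeries.coeff m) (f ^ k))).symm
  rw [h, PowerSeries.coeff_map]
  rfl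

theorem Ec_rescale (a : S) (f : PowerSeries S) (n : ℕ) :
    EcX (K := K) (rescale a f) n = a ^ n * EcX (K := K) f n := by
  unfold EcX
  have h : (∑ k ∈ Finset.range (n + 1), ((k.factorial : K)⁻¹) • rescale a f ^ k)
      = rescale a (∑ k ∈ Finset.range (n + 1), ((k.factorial : K)⁻¹) • f ^ k) := by
    rw [map_sum]
    refine Finset.sum_congr rfl (fun k _ => ?_)
    ext m
    simp only [PowerSeries.coeff_rescale, PowerSeries.coeff_smul, ← map_pow,
      mul_smul_comm]
  rw [h, PowerSeries.coeff_rescale]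


theorem fact_succ_inv (m : ℕ) :
    (((m+1).factorial : K)⁻¹) * ((m+1 : ℕ) : K) = ((m.factorial : K)⁻¹) := by
  have h1 : ((m+1 : ℕ) : K) ≠ 0 := Nat.cast_ne_zero.mpr (by omega)
  have h2 : (m.factorial : K) ≠ 0 := Nat.cast_ne_zero.mpr m.factorial_ne_zero
  rw [Nat.factorial_succ]
  push_cast
  field_simp

variable (K) in
def Lser (a : K) : PowerSeries K := PowerSeries.mk fun r => if r = 0 then 0 else a ^ r / r

theorem constantCoeff_Lser (a : K) : constantCoeff (Lser K a) = 0 := by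
  simp [Lser, ← coeff_zero_eq_constantCoeff]

theorem Ec_rec {f : PowerSeries K} (hf : constantCoeff f = 0) (n : ℕ) :
    ((n + 1 : ℕ) : K) * EcX (K := K) f (n + 1)
      = ∑ p ∈ antidiagonal n,
          (coeff (p.1 + 1) f * ((p.1 + 1 : ℕ) : K)) * EcX (K := K) f p.2 := by
  have h0 : ((n + 1 : ℕ) : K) * EcX (K := K) f (n + 1)
      = coeff n (d⁄dX K (∑ k ∈ Finset.range (n + 2), ((k.factorial : K)⁻¹) • f ^ k)) := by
    rw [PowerSeries.coeff_derivative]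
    unfold EcX
    push_cast
    ring
  rw [h0, map_sum, map_sum]
  have h1 : ∀ k : ℕ, coeff n (d⁄dX K (((k.factorial : K)⁻¹) • f ^ k))
      = ((k.factorial : K)⁻¹ * (k : K)) • coeff n (f ^ (k-1) * d⁄dX K f) := by
    intro k
    rw [Derivation.map_smul, Derivation.leibniz_pow, smul_eq_mul (a := f ^ (k-1)),
      PowerSeries.coeff_smul, map_nsmul, ← Nat.cast_smul_eq_nsmul K, smul_smul]
  rw [Finset.sum_congr rfl (fun k _ => h1 k)]
  rw [Finset.sum_range_succ']
  simp only [Nat.cast_zero, mul_zero, zero_smul, add_zero]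
  have h2 : ∀ m : ℕ, (((m+1).factorial : K)⁻¹ * ((m+1 : ℕ) : K))
        • coeff n (f ^ (m+1-1) * d⁄dX K f)
      = ((m.factorial : K)⁻¹) • coeff n (f ^ m * d⁄dX K f) := by
    intro m
    rw [fact_succ_inv]
    norm_num
  rw [Finset.sum_congr rfl (fun m _ => h2 m)]
  have h3 : ∑ m ∈ Finset.range (n+1), ((m.factorial : K)⁻¹) • coeff n (f ^ m * d⁄dX K f)
      = coeff n ((d⁄dX K f) * ∑ m ∈ Finset.range (n+1), ((m.factorial : K)⁻¹) • f ^ m) := by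
    rw [Finset.mul_sum, map_sum]
    refine Finset.sum_congr rfl (fun m _ => ?_)
    rw [mul_smul_comm, PowerSeries.coeff_smul, mul_comm]
  rw [h3, PowerSeries.coeff_mul]
  refine Finset.sum_congr rfl (fun p hp => ?_)
  rw [Finset.HasAntidiagonal.mem_antidiagonal] at hp
  rw [PowerSeries.coeff_derivative, ← Ec_eq hf (by omega : p.2 ≤ n)]
  push_cast
  ring

theorem EcX_Lser (a : K) (n : ℕ) : EcX (K := K) (Lser K a) n = a ^ n := by
  induction n using Nat.strong_induction_on with
  | _ n ih =>
    match n with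
    | 0 => simpa using Ec_zero (Lser K a)
    | (m+1) =>
      have h := Ec_rec (constantCoeff_Lser a) m
      have hcongr : ∀ p ∈ antidiagonal m,
          (coeff (p.1 + 1) (Lser K a) * ((p.1 + 1 : ℕ) : K)) * EcX (K := K) (Lser K a) p.2
          = a ^ (m+1) := by
        intro p hp
        rw [Finset.HasAntidiagonal.mem_antidiagonal] at hp
        have hne : ((p.1 + 1 : ℕ) : K) ≠ 0 := Nat.cast_ne_zero.mpr (by omega)
        rw [ih p.2 (by omega), Lser, PowerSeries.coeff_mk]
        simp only [Nat.add_eq_zero, one_ne_zero, and_false, if_false]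
        rw [div_mul_cancel₀ _ hne]
        rw [← pow_add]
        congr 1
        omega
      rw [Finset.sum_congr rfl hcongr, Finset.sum_const, Finset.Nat.card_antidiagonal] at h
      have hne : ((m + 1 : ℕ) : K) ≠ 0 := Nat.cast_ne_zero.mpr (by omega)
      have : ((m+1 : ℕ) : K) * EcX (K := K) (Lser K a) (m+1)
          = ((m+1 : ℕ) : K) * a ^ (m+1) := by
        rw [h, nsmul_eq_mul]
      exact mul_left_cancel₀ hne this

variable (K) in
def geomS (a : K) : PowerSeries K := PowerSeries.mk fun n => a ^ n

variable (K) in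
def Eser (f : PowerSeries K) : PowerSeries K := PowerSeries.mk (EcX (K := K) f)

theorem Eser_mul {f g : PowerSeries K} (hf : constantCoeff f = 0)
    (hg : constantCoeff g = 0) : Eser K (f + g) = Eser K f * Eser K g := by
  ext n
  rw [Eser, Eser, Eser, PowerSeries.coeff_mk, PowerSeries.coeff_mul, Ec_mul hf hg]
  exact Finset.sum_congr rfl fun p _ => by rw [PowerSeries.coeff_mk, PowerSeries.coeff_mk]

theorem Eser_Lser (a : K) : Eser K (Lser K a) = geomS K a := by
  ext n
  rw [Eser, geomS, PowerSeries.coeff_mk, PowerSeries.coeff_mk, EcX_Lser]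

theorem geomS_inv (a : K) : geomS K a * (1 - C a * X) = 1 := by
  ext n
  rw [mul_sub, mul_one, map_sub]
  cases n with
  | zero =>
    simp [geomS, PowerSeries.constantCoeff_mk]
  | succ m =>
    rw [← mul_assoc, PowerSeries.coeff_succ_mul_X, PowerSeries.coeff_mul_C]
    simp [geomS, PowerSeries.coeff_mk, PowerSeries.coeff_one, pow_succ]

theorem quad_id (t s : K) :
    (1 - C s * X) * (1 - C t * X) + C ((1-t)*(s-1)) * X
      = (1 - C 1 * X) * (1 - C (t*s) * X) := by
  simp only [map_mul, map_sub, map_one]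
  ring

variable (K) in
def uSer (t s : K) : PowerSeries K :=
  PowerSeries.mk fun r => if r = 0 then 0 else ((1 - t ^ r) * (s ^ r - 1)) / r

theorem constantCoeff_uSer (t s : K) : constantCoeff (uSer K t s) = 0 := by
  rw [← PowerSeries.coeff_zero_eq_constantCoeff]
  simp [uSer]

theorem uSer_add (t s : K) :
    uSer K t s + Lser K 1 + Lser K (t*s) = Lser K s + Lser K t := by
  ext r
  simp only [map_add, uSer, Lser, PowerSeries.coeff_mk]
  rcases Nat.eq_zero_or_pos r with h|h
  · subst h; simp
  · have hr : (r : K) ≠ 0 := Nat.cast_ne_zero.mpr (by omega)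
    rw [if_neg (by omega), if_neg (by omega), if_neg (by omega), if_neg (by omega),
      if_neg (by omega)]
    field_simp
    ring

theorem Eser_uSer (t s : K) :
    Eser K (uSer K t s) = 1 + C ((1-t)*(s-1)) * X * (geomS K s * geomS K t) := by
  have h1 : Eser K (uSer K t s) * (geomS K 1 * geomS K (t*s)) = geomS K s * geomS K t := by
    rw [← Eser_Lser s, ← Eser_Lser t, ← Eser_mul (constantCoeff_Lser s) (constantCoeff_Lser t),
      ← uSer_add t s]
    rw [Eser_mul (by rw [map_add, constantCoeff_uSer, constantCoeff_Lser, add_zero])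
      (constantCoeff_Lser (t*s)),
      Eser_mul (constantCoeff_uSer t s) (constantCoeff_Lser 1),
      Eser_Lser, Eser_Lser]
    ring
  have h3 : (geomS K 1 * geomS K (t*s)) * ((1 - C 1 * X) * (1 - C (t*s) * X)) = 1 := by
    have : (geomS K 1 * geomS K (t*s)) * ((1 - C 1 * X) * (1 - C (t*s) * X))
        = (geomS K 1 * (1 - C 1 * X)) * (geomS K (t*s) * (1 - C (t*s) * X)) := by ring
    rw [this, geomS_inv, geomS_inv, one_mul]
  have h2 : (geomS K s * geomS K t) * ((1 - C 1 * X) * (1 - C (t*s) * X))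
      = 1 + C ((1-t)*(s-1)) * X * (geomS K s * geomS K t) := by
    rw [← quad_id, mul_add]
    have : (geomS K s * geomS K t) * ((1 - C s * X) * (1 - C t * X))
        = (geomS K s * (1 - C s * X)) * (geomS K t * (1 - C t * X)) := by ring
    rw [this, geomS_inv, geomS_inv, one_mul]
    ring
  calc Eser K (uSer K t s)
      = Eser K (uSer K t s) * ((geomS K 1 * geomS K (t*s))
          * ((1 - C 1 * X) * (1 - C (t*s) * X))) := by rw [h3, mul_one]
    _ = (Eser K (uSer K t s) * (geomS K 1 * geomS K (t*s)))
          * ((1 - C 1 * X) * (1 - C (t*s) * X)) := by ring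
    _ = (geomS K s * geomS K t) * ((1 - C 1 * X) * (1 - C (t*s) * X)) := by rw [h1]
    _ = _ := h2

theorem EcX_uSer_succ (t s : K) (j : ℕ) :
    EcX (K := K) (uSer K t s) (j+1)
      = ((1-t)*(s-1)) * ∑ p ∈ antidiagonal j, s ^ p.1 * t ^ p.2 := by
  have h0 : EcX (K := K) (uSer K t s) (j+1) = coeff (j+1) (Eser K (uSer K t s)) :=
    (PowerSeries.coeff_mk _ _).symm
  rw [h0, Eser_uSer, map_add]
  have h1 : coeff (j+1) (1 : PowerSeries K) = 0 := by
    rw [PowerSeries.coeff_one]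
    simp
  have h2 : C ((1-t)*(s-1)) * X * (geomS K s * geomS K t)
      = (C ((1-t)*(s-1)) * (geomS K s * geomS K t)) * X := by ring
  rw [h1, zero_add, h2, PowerSeries.coeff_succ_mul_X, PowerSeries.coeff_C_mul,
    PowerSeries.coeff_mul]
  congr 1
  exact Finset.sum_congr rfl fun p _ => by rw [geomS, geomS, PowerSeries.coeff_mk,
    PowerSeries.coeff_mk]

end CtC

namespace CtC
section Operator
variable {K : Type} [Field K] [CharZero K]

def fser (t : K) : PowerSeries (MvPolynomial ℕ K) :=
  PowerSeries.mk fun r =>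
    if r = 0 then 0 else ((1 - t ^ r) / (r : K)) • MvPolynomial.X r

theorem cPoly_eq (t : K) (k : ℕ) : cPoly t k = EcX (K := K) (fser t) k := rfl

def AS (b : ℕ → K) : MvPolynomial ℕ K →ₐ[K] Polynomial (MvPolynomial ℕ K) :=
  MvPolynomial.aeval fun n => Polynomial.C (MvPolynomial.X n) +
    Polynomial.C (MvPolynomial.C (b n)) * Polynomial.X ^ n

theorem subShift_eq (b : ℕ → K) (g : MvPolynomial ℕ K) : subShift b g = AS b g := rfl

def uscal (b : ℕ → K) (t : K) : PowerSeries K :=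
  PowerSeries.mk fun r => if r = 0 then 0 else ((1 - t ^ r) * b r) / r

def CA : MvPolynomial ℕ K →ₐ[K] Polynomial (MvPolynomial ℕ K) :=
  IsScalarTower.toAlgHom K _ _

theorem CA_apply (x : MvPolynomial ℕ K) : CA x = Polynomial.C x := rfl

theorem constantCoeff_fser (t : K) :
    PowerSeries.constantCoeff (fser t) = 0 := by
  rw [← PowerSeries.coeff_zero_eq_constantCoeff]
  simp [fser]

theorem map_AS_fser (b : ℕ → K) (t : K) :
    PowerSeries.map ((AS b : MvPolynomial ℕ K →ₐ[K] _) : MvPolynomial ℕ K →+* _) (fser t)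
      = PowerSeries.map ((CA : MvPolynomial ℕ K →ₐ[K] _) : MvPolynomial ℕ K →+* _) (fser t)
        + PowerSeries.rescale Polynomial.X
            (PowerSeries.map (algebraMap K (Polynomial (MvPolynomial ℕ K))) (uscal b t)) := by
  refine PowerSeries.ext fun r => ?_
  rw [map_add, PowerSeries.coeff_map, PowerSeries.coeff_map, PowerSeries.coeff_rescale,
    PowerSeries.coeff_map]
  rcases Nat.eq_zero_or_pos r with h | h
  · subst h; simp [fser, uscal]
  · have hr0 : ¬ (r = 0) := by omega
    simp only [fser, uscal, PowerSeries.coeff_mk, if_neg hr0, RingHom.coe_coe]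
    rw [map_smul (AS b), map_smul (CA (K := K))]
    rw [show (AS b) (MvPolynomial.X r) = Polynomial.C (MvPolynomial.X r) +
      Polynomial.C (MvPolynomial.C (b r)) * Polynomial.X ^ r from MvPolynomial.aeval_X _ r]
    rw [CA_apply, smul_add]
    congr 1
    · rw [Algebra.smul_def]
      rw [show ((1 - t ^ r) * b r / (r : K)) = ((1 - t ^ r) / (r : K)) * b r from by ring]
      rw [map_mul (algebraMap K (Polynomial (MvPolynomial ℕ K)))]
      simp only [Polynomial.algebraMap_apply, MvPolynomial.algebraMap_eq]
      ring

theorem constantCoeff_uscal (b : ℕ → K) (t : K) :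
    PowerSeries.constantCoeff (uscal b t) = 0 := by
  rw [← PowerSeries.coeff_zero_eq_constantCoeff]
  simp [uscal]

theorem subShift_cPoly (b : ℕ → K) (t : K) (ℓ : ℕ) :
    subShift b (cPoly t ℓ) = ∑ p ∈ antidiagonal ℓ,
      Polynomial.C (cPoly t p.1 * MvPolynomial.C (EcX (K := K) (uscal b t) p.2))
        * Polynomial.X ^ p.2 := by
  have h0 : subShift b (cPoly t ℓ)
      = EcX (K := K) (PowerSeries.map ((AS b : MvPolynomial ℕ K →ₐ[K] _) :
          MvPolynomial ℕ K →+* _) (fser t)) ℓ := by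
    rw [subShift_eq, cPoly_eq, Ec_map]
  rw [h0, map_AS_fser]
  have hc1 : PowerSeries.constantCoeff
      (PowerSeries.map ((CA : MvPolynomial ℕ K →ₐ[K] Polynomial (MvPolynomial ℕ K)) :
        MvPolynomial ℕ K →+* Polynomial (MvPolynomial ℕ K)) (fser t)) = 0 := by
    rw [← PowerSeries.coeff_zero_eq_constantCoeff, PowerSeries.coeff_map,
      PowerSeries.coeff_zero_eq_constantCoeff, constantCoeff_fser, map_zero]
  have hc2 : PowerSeries.constantCoeff
      (PowerSeries.rescale Polynomial.X
        (PowerSeries.map (algebraMap K (Polynomial (MvPolynomial ℕ K))) (uscal b t))) = 0 := by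
    rw [← PowerSeries.coeff_zero_eq_constantCoeff, PowerSeries.coeff_rescale, pow_zero, one_mul,
      PowerSeries.coeff_map, PowerSeries.coeff_zero_eq_constantCoeff, constantCoeff_uscal,
      map_zero]
  rw [Ec_mul hc1 hc2]
  refine Finset.sum_congr rfl fun p _ => ?_
  rw [Ec_map CA (fser t) p.1, Ec_rescale]
  rw [show (algebraMap K (Polynomial (MvPolynomial ℕ K)))
      = ((Algebra.ofId K (Polynomial (MvPolynomial ℕ K)) : K →ₐ[K] _) : K →+* _) from rfl]
  rw [Ec_map (Algebra.ofId K (Polynomial (MvPolynomial ℕ K))) (uscal b t) p.2]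
  rw [CA_apply, ← cPoly_eq]
  rw [show (Algebra.ofId K (Polynomial (MvPolynomial ℕ K))) (EcX (K := K) (uscal b t) p.2)
      = Polynomial.C (MvPolynomial.C (EcX (K := K) (uscal b t) p.2)) from by
    rw [Algebra.ofId_apply, Polynomial.algebraMap_apply, MvPolynomial.algebraMap_eq]]
  rw [map_mul]
  ring

theorem coeff_subShift_cPoly (b : ℕ → K) (t : K) (ℓ i : ℕ) :
    (subShift b (cPoly t ℓ)).coeff i
      = MvPolynomial.C (EcX (K := K) (uscal b t) i) * cPolyZ t ((ℓ : ℤ) - (i : ℤ)) := by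
  rw [subShift_cPoly, Polynomial.finset_sum_coeff]
  have hterm : ∀ p : ℕ × ℕ, (Polynomial.C (cPoly t p.1
        * MvPolynomial.C (EcX (K := K) (uscal b t) p.2)) * Polynomial.X ^ p.2).coeff i
      = if i = p.2 then cPoly t p.1 * MvPolynomial.C (EcX (K := K) (uscal b t) p.2) else 0 := by
    intro p
    rw [Polynomial.coeff_C_mul, Polynomial.coeff_X_pow]
    split <;> simp
  rw [Finset.sum_congr rfl fun p _ => hterm p]
  by_cases hi : i ≤ ℓ
  · rw [Finset.sum_eq_single ((ℓ - i : ℕ), i)]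
    · rw [if_pos rfl, cPolyZ, if_pos (by omega)]
      rw [show ((ℓ : ℤ) - (i : ℤ)).toNat = ℓ - i from by omega]
      ring
    · intro p hp hne
      rw [Finset.HasAntidiagonal.mem_antidiagonal] at hp
      rw [if_neg]
      intro hcon
      exact hne (by rw [Prod.ext_iff]; constructor <;> simp <;> omega)
    · intro hno
      exact absurd (Finset.HasAntidiagonal.mem_antidiagonal.mpr (by omega : (ℓ - i, i).1 + (ℓ - i, i).2 = ℓ)) hno
  · rw [Finset.sum_eq_zero, cPolyZ, if_neg (by omega), mul_zero]
    intro p hp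
    rw [Finset.HasAntidiagonal.mem_antidiagonal] at hp
    rw [if_neg (by omega)]

theorem EcX_uscal_bq (q t : K) (j : ℕ) :
    EcX (K := K) (uscal (bq q) t) (j+1) = ((1-t)*(q⁻¹-1)) * qtInt t q⁻¹ (j+1) := by
  have h : uscal (bq q) t = uSer K t q⁻¹ := rfl
  rw [h, EcX_uSer_succ]
  congr 1
  rw [qtInt, Finset.Nat.sum_antidiagonal_eq_sum_range_succ (fun a b => q⁻¹ ^ a * t ^ b) j,
    ← Finset.sum_range_reflect]
  refine Finset.sum_congr rfl fun m hm => ?_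
  rw [Finset.mem_range] at hm
  have h1 : j + 1 - 1 - m = j - m := by omega
  have h2 : j - (j - m) = m := by omega
  rw [h1, h2, mul_comm]

end Operator
end CtC
end

/-- With `\widetilde{c}_k = ctOp (bq q) k` (differential operators in the `p`'s)
and `c_ℓ = cPoly t ℓ` (multiplication operators), the commutator satisfies
`[\widetilde{c}_k, c_ℓ] = (1-t)(q⁻¹-1) ∑_{m=0}^{k-1} [[k-m]]_{(t,q⁻¹)} c_{m+ℓ-k} \widetilde{c}_m`
(as operators on `ℚ(q,t)[p₁,p₂,…]`, stated pointwise), where `c_n = 0` for `n < 0`. -/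
theorem ct_c_commutator {K : Type} [Field K] [CharZero K] (q t : K) (hq : q ≠ 0)
    (k ℓ : ℕ) (g : MvPolynomial ℕ K) :
    ctOp (bq q) k (cPoly t ℓ * g) - cPoly t ℓ * ctOp (bq q) k g =
      MvPolynomial.C ((1 - t) * (q⁻¹ - 1)) *
        ∑ m ∈ Finset.range k,
          MvPolynomial.C (qtInt t q⁻¹ (k - m)) *
            (cPolyZ t ((m : ℤ) + ℓ - k) * ctOp (bq q) m g) := by
  classical
  have hmul : subShift (bq q) (cPoly t ℓ * g)
      = subShift (bq q) (cPoly t ℓ) * subShift (bq q) g := by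
    rw [CtC.subShift_eq, CtC.subShift_eq, CtC.subShift_eq, map_mul]
  have hL : ctOp (bq q) k (cPoly t ℓ * g)
      = ∑ i ∈ Finset.range (k+1),
          MvPolynomial.C (CtC.EcX (K := K) (CtC.uscal (bq q) t) i)
            * cPolyZ t ((ℓ : ℤ) - (i : ℤ)) * ctOp (bq q) (k - i) g := by
    show (subShift (bq q) (cPoly t ℓ * g)).coeff k = _
    rw [hmul, Polynomial.coeff_mul,
      Finset.Nat.sum_antidiagonal_eq_sum_range_succ
        (fun a b => (subShift (bq q) (cPoly t ℓ)).coeff a * (subShift (bq q) g).coeff b) k]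
    refine Finset.sum_congr rfl fun i hi => ?_
    rw [CtC.coeff_subShift_cPoly]
    rfl
  rw [hL, Finset.sum_range_succ']
  have h00 : MvPolynomial.C (CtC.EcX (K := K) (CtC.uscal (bq q) t) 0)
      * cPolyZ t ((ℓ : ℤ) - ((0:ℕ) : ℤ)) * ctOp (bq q) (k - 0) g
      = cPoly t ℓ * ctOp (bq q) k g := by
    rw [CtC.Ec_zero, map_one, one_mul, Nat.sub_zero]
    congr 2
  rw [h00, add_sub_cancel_right, ← Finset.sum_range_reflect, Finset.mul_sum]
  refine Finset.sum_congr rfl fun m hm => ?_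
  rw [Finset.mem_range] at hm
  have e1 : k - 1 - m + 1 = k - m := by omega
  have e2 : k - (k - m) = m := by omega
  rw [e1, e2]
  have e3 : k - m = (k - m - 1) + 1 := by omega
  rw [show CtC.EcX (K := K) (CtC.uscal (bq q) t) (k - m)
      = ((1-t)*(q⁻¹-1)) * qtInt t q⁻¹ (k - m) from by
    rw [e3]; exact CtC.EcX_uscal_bq q t (k - m - 1)]
  rw [show ((ℓ : ℤ) - ((k - m : ℕ) : ℤ)) = ((m : ℤ) + ℓ - k) from by omega]
  rw [map_mul]
  ring
end

section
/- On the exterior-algebra sector with exactly one fermion, the operator $\mathsf{T}_q := \sum_{n\ge1}\sum_{k\ge0} \widetilde{c}_k^\vee \, \pi_{n+k}\, q^{n-1} \partial_{\pi_n}$ satisfies $\mathsf{T}_q(\pi_k p_\ell) = q^{k-1}(\pi_k p_\ell + (q^\ell - 1)\pi_{k+\ell})$ for all $k, \ell \ge 1$. -/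
noncomputable section

variable {K : Type} [Field K] [CharZero K]

/-- The super-polynomial ring `K[p₁,p₂,…] ⊗ Λ[π₁,π₂,…]`, modelled by finitely supported
functions assigning to each finite set `T` of fermionic indices (the wedge monomial
`π_{t₁} ∧ ⋯ ∧ π_{t_m}`, indices increasing) a bosonic coefficient. -/
abbrev SP (K : Type) [Field K] := Finset ℕ →₀ MvPolynomial ℕ K

/-- Multiplication by a bosonic element `f`, acting coefficientwise. -/
def fmul (f : MvPolynomial ℕ K) (v : SP K) : SP K :=
  v.sum fun T r => Finsupp.single T (f * r)

/-- A bosonic operator `A` (e.g. a differential operator in the `p`'s) acting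
coefficientwise. -/
def fop (A : MvPolynomial ℕ K → MvPolynomial ℕ K) (v : SP K) : SP K :=
  v.sum fun T r => Finsupp.single T (A r)

/-- Left multiplication by the fermionic generator `π_k`:
`π_k · e_T = (-1)^{#{s∈T : s<k}} e_{T∪{k}}` for `k ∉ T`, and `0` otherwise. -/
def fermi (k : ℕ) (v : SP K) : SP K :=
  v.sum fun T r =>
    if k ∈ T then 0
    else Finsupp.single (insert k T)
      ((-1 : MvPolynomial ℕ K) ^ ((T.filter fun j => j < k).card) * r)

/-- The odd derivation `∂_{π_k}` with `{∂_{π_k}, π_ℓ} = δ_{kℓ}`: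
`∂_{π_k} e_T = (-1)^{#{s∈T : s<k}} e_{T\{k}}` for `k ∈ T`, and `0` otherwise. -/
def dfermi (k : ℕ) (v : SP K) : SP K :=
  v.sum fun T r =>
    if k ∈ T then
      Finsupp.single (T.erase k)
        ((-1 : MvPolynomial ℕ K) ^ ((T.filter fun j => j < k).card) * r)
    else 0

end

noncomputable section

variable {K : Type} [Field K] [CharZero K]

/-- The operator `𝖳_q = ∑_{n≥1} ∑_{k≥0} \widetilde{c}_k^∨ π_{n+k} q^{n-1} ∂_{π_n}`
(the index shift `n ↦ n+1` runs the first sum over `n ≥ 1`); both sums are locally finite. -/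
def Tq (q : K) (v : SP K) : SP K :=
  ∑ᶠ n : ℕ, ∑ᶠ k : ℕ,
    fop (ctOp (bqVee q) k)
      (fermi (n + 1 + k) (fmul (MvPolynomial.C ((q : K) ^ n)) (dfermi (n + 1) v)))

lemma dfermi_zero (n : ℕ) : dfermi n (0 : SP K) = 0 := Finsupp.sum_zero_index

lemma fmul_zero' (f : MvPolynomial ℕ K) : fmul f (0 : SP K) = 0 := Finsupp.sum_zero_index

lemma fermi_zero (n : ℕ) : fermi n (0 : SP K) = 0 := Finsupp.sum_zero_index

lemma fop_zero' (A : MvPolynomial ℕ K → MvPolynomial ℕ K) : fop A (0 : SP K) = 0 :=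
  Finsupp.sum_zero_index

lemma dfermi_single (n : ℕ) (T : Finset ℕ) (r : MvPolynomial ℕ K) :
    dfermi n (Finsupp.single T r) =
      if n ∈ T then Finsupp.single (T.erase n)
        ((-1 : MvPolynomial ℕ K) ^ ((T.filter fun j => j < n).card) * r) else 0 := by
  rw [dfermi, Finsupp.sum_single_index]
  split <;> simp

lemma fmul_single (f : MvPolynomial ℕ K) (T : Finset ℕ) (r : MvPolynomial ℕ K) :
    fmul f (Finsupp.single T r) = Finsupp.single T (f * r) := by
  rw [fmul, Finsupp.sum_single_index]
  simp

lemma fermi_single (n : ℕ) (T : Finset ℕ) (r : MvPolynomial ℕ K) :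
    fermi n (Finsupp.single T r) =
      if n ∈ T then 0
      else Finsupp.single (insert n T)
        ((-1 : MvPolynomial ℕ K) ^ ((T.filter fun j => j < n).card) * r) := by
  rw [fermi, Finsupp.sum_single_index]
  split <;> simp

lemma fop_single (A : MvPolynomial ℕ K → MvPolynomial ℕ K) (hA : A 0 = 0)
    (T : Finset ℕ) (r : MvPolynomial ℕ K) :
    fop A (Finsupp.single T r) = Finsupp.single T (A r) := by
  rw [fop, Finsupp.sum_single_index]
  simp [hA]

lemma ctOp_zero' (b : ℕ → K) (m : ℕ) : ctOp b m (0 : MvPolynomial ℕ K) = 0 := by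
  simp [ctOp, subShift]

lemma ctOp_C_mul_X (b : ℕ → K) (m ℓ : ℕ) (hℓ : 1 ≤ ℓ) (c : K) :
    ctOp b m (MvPolynomial.C c * MvPolynomial.X ℓ) =
      if m = 0 then MvPolynomial.C c * MvPolynomial.X ℓ
      else if m = ℓ then MvPolynomial.C (c * b ℓ) else 0 := by
  have : subShift b (MvPolynomial.C c * MvPolynomial.X ℓ) =
      Polynomial.C (MvPolynomial.C c * MvPolynomial.X ℓ) +
        Polynomial.C (MvPolynomial.C c * MvPolynomial.C (b ℓ)) * Polynomial.X ^ ℓ := by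
    simp [subShift, MvPolynomial.aeval_X, mul_add, map_mul]
    ring
  rw [ctOp, this]
  rw [Polynomial.coeff_add, Polynomial.coeff_C, Polynomial.coeff_C_mul,
    Polynomial.coeff_X_pow]
  split_ifs with h1 h2 h3 <;> simp_all <;> omega

/-- on the one-fermion sector,
`𝖳_q (π_k p_ℓ) = q^{k-1} (π_k p_ℓ + (q^ℓ - 1) π_{k+ℓ})` for all `k, ℓ ≥ 1`. -/
theorem Tq_on_pi_p (q : K) (hq : q ≠ 0) (k ℓ : ℕ) (hk : 1 ≤ k) (hℓ : 1 ≤ ℓ) :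
    Tq q (Finsupp.single {k} (MvPolynomial.X ℓ)) =
      Finsupp.single {k} (MvPolynomial.C ((q : K) ^ (k - 1)) * MvPolynomial.X ℓ) +
        Finsupp.single {k + ℓ} (MvPolynomial.C ((q : K) ^ (k - 1) * (q ^ ℓ - 1))) := by
  have hk1 : k - 1 + 1 = k := Nat.succ_pred_eq_of_pos hk
  rw [Tq, finsum_eq_single _ (k - 1)]
  · -- the n = k - 1 term
    have hd : dfermi (k - 1 + 1) (Finsupp.single {k} (MvPolynomial.X ℓ) : SP K) =
        Finsupp.single ∅ (MvPolynomial.X ℓ) := by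
      rw [dfermi_single, hk1]
      have hfil : Finset.filter (fun j => j < k) ({k} : Finset ℕ) = ∅ := by
        rw [Finset.filter_singleton, if_neg (lt_irrefl k)]
      rw [if_pos (Finset.mem_singleton_self k), hfil, Finset.erase_singleton,
        Finset.card_empty, pow_zero, one_mul]
    rw [hd]
    have key : ∀ m : ℕ,
        fop (ctOp (bqVee q) m)
          (fermi (k - 1 + 1 + m)
            (fmul (MvPolynomial.C ((q : K) ^ (k - 1)))
              (Finsupp.single ∅ (MvPolynomial.X ℓ)) : SP K)) =
        Finsupp.single {k + m}
          (ctOp (bqVee q) m (MvPolynomial.C ((q : K) ^ (k - 1)) * MvPolynomial.X ℓ)) := by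
      intro m
      rw [fmul_single, fermi_single]
      simp only [Finset.notMem_empty, if_false, Finset.filter_empty, Finset.card_empty,
        pow_zero, one_mul, insert_empty_eq, hk1]
      rw [fop_single _ (ctOp_zero' _ _)]
    have hsupp : (Function.support fun m : ℕ =>
        (Finsupp.single {k + m}
          (ctOp (bqVee q) m (MvPolynomial.C ((q : K) ^ (k - 1)) * MvPolynomial.X ℓ)) : SP K))
        ⊆ (({0, ℓ} : Finset ℕ) : Set ℕ) := by
      intro m hm
      simp only [Function.mem_support] at hm
      by_contra hmem
      simp only [Finset.coe_insert, Finset.coe_singleton, Set.mem_insert_iff,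
        Set.mem_singleton_iff, not_or] at hmem
      apply hm
      rw [ctOp_C_mul_X _ _ _ hℓ, if_neg hmem.1, if_neg hmem.2]
      simp
    calc (∑ᶠ m : ℕ, fop (ctOp (bqVee q) m)
          (fermi (k - 1 + 1 + m)
            (fmul (MvPolynomial.C ((q : K) ^ (k - 1)))
              (Finsupp.single ∅ (MvPolynomial.X ℓ)) : SP K)))
        = ∑ᶠ m : ℕ, (Finsupp.single {k + m}
            (ctOp (bqVee q) m (MvPolynomial.C ((q : K) ^ (k - 1)) * MvPolynomial.X ℓ)) : SP K) := by
          exact finsum_congr key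
      _ = ∑ m ∈ ({0, ℓ} : Finset ℕ), (Finsupp.single {k + m}
            (ctOp (bqVee q) m (MvPolynomial.C ((q : K) ^ (k - 1)) * MvPolynomial.X ℓ)) : SP K) :=
          finsum_eq_finset_sum_of_support_subset _ hsupp
      _ = _ := by
          rw [Finset.sum_pair (by omega : (0 : ℕ) ≠ ℓ)]
          rw [ctOp_C_mul_X _ _ _ hℓ, ctOp_C_mul_X _ _ _ hℓ]
          rw [if_pos rfl, if_neg (by omega : ¬ ℓ = 0), if_pos rfl]
          simp [bqVee, map_mul]
  · -- all other n give zero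
    intro n hn
    have hd : dfermi (n + 1) (Finsupp.single {k} (MvPolynomial.X ℓ) : SP K) = 0 := by
      rw [dfermi_single, if_neg]
      simp only [Finset.mem_singleton]
      omega
    rw [hd]
    simp only [fmul_zero', fermi_zero, fop_zero']
    exact finsum_zero

end
end
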